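/- Let X and X' be random variables on a space X, and suppose there exist events E, E' with P(X ∈ E) = e^{±ε₁}·P(X' ∈ E') (i.e., the ratio of the two probabilities lies in [e^{−ε₁}, e^{ε₁}]), and similarly for their complements, and such that X conditioned on E is (ε₂, δ)-DP-indistinguishable from X' conditioned on E', and X conditioned on ¬E is (ε₂, δ)-DP-indistinguishable from X' conditioned on ¬E'. Then X and X' are (ε₁+ε₂, δe^{ε₁})-DP-indistinguishable. -/

import Mathlib

open MeasureTheory ProbabilityTheory

/-- `(ε,δ)`-DP-indistinguishability of two distributions: for every measurable event `T`,
`μ T ≤ e^ε ν T + δ` and symmetrically. -/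
def DPIndist {X : Type*} [MeasurableSpace X] (ε δ : ℝ) (μ ν : Measure X) : Prop :=
  ∀ T : Set X, MeasurableSet T →
    μ T ≤ ENNReal.ofReal (Real.exp ε) * ν T + ENNReal.ofReal δ ∧
    ν T ≤ ENNReal.ofReal (Real.exp ε) * μ T + ENNReal.ofReal δ

lemma mul_cond_apply' {X : Type*} [MeasurableSpace X] (μ : Measure X) [IsFiniteMeasure μ]
    {E : Set X} (hE : MeasurableSet E) (T : Set X) :
    μ E * (μ[|E]) T = μ (E ∩ T) := by
  rw [ProbabilityTheory.cond_apply hE]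
  by_cases h : μ E = 0
  · have h2 : μ (E ∩ T) = 0 := measure_mono_null Set.inter_subset_left h
    simp [h, h2]
  · rw [← mul_assoc, ENNReal.mul_inv_cancel h (measure_ne_top μ E), one_mul]

lemma dp_aux_one {X : Type*} [MeasurableSpace X] (μ ν : Measure X)
    [IsProbabilityMeasure μ] [IsProbabilityMeasure ν] (ε₁ ε₂ δ : ℝ)
    {E E' : Set X} (hE : MeasurableSet E) (hE' : MeasurableSet E')
    (h1 : μ E ≤ ENNReal.ofReal (Real.exp ε₁) * ν E')
    (h2 : μ Eᶜ ≤ ENNReal.ofReal (Real.exp ε₁) * ν E'ᶜ)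
    {T : Set X} (hT : MeasurableSet T)
    (hc : (μ[|E]) T ≤ ENNReal.ofReal (Real.exp ε₂) * (ν[|E']) T + ENNReal.ofReal δ)
    (hcc : (μ[|Eᶜ]) T ≤ ENNReal.ofReal (Real.exp ε₂) * (ν[|E'ᶜ]) T + ENNReal.ofReal δ) :
    μ T ≤ ENNReal.ofReal (Real.exp (ε₁ + ε₂)) * ν T + ENNReal.ofReal δ := by
  set K₁ := ENNReal.ofReal (Real.exp ε₁)
  set K₂ := ENNReal.ofReal (Real.exp ε₂)
  set d := ENNReal.ofReal δ
  have hμsplit : μ T = μ (E ∩ T) + μ (Eᶜ ∩ T) := by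
    rw [Set.inter_comm E T, Set.inter_comm Eᶜ T, ← Set.diff_eq,
      measure_inter_add_diff T hE]
  have hνsplit : ν (E' ∩ T) + ν (E'ᶜ ∩ T) = ν T := by
    rw [Set.inter_comm E' T, Set.inter_comm E'ᶜ T, ← Set.diff_eq,
      measure_inter_add_diff T hE']
  have hone : μ E + μ Eᶜ = 1 := by
    rw [measure_add_measure_compl hE]; simp
  have hK : K₁ * K₂ = ENNReal.ofReal (Real.exp (ε₁ + ε₂)) := by
    rw [Real.exp_add, ENNReal.ofReal_mul (Real.exp_nonneg ε₁)]
  calc μ T = μ E * (μ[|E]) T + μ Eᶜ * (μ[|Eᶜ]) T := by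
        rw [mul_cond_apply' μ hE, mul_cond_apply' μ hE.compl]; exact hμsplit
    _ ≤ μ E * (K₂ * (ν[|E']) T + d) + μ Eᶜ * (K₂ * (ν[|E'ᶜ]) T + d) :=
        add_le_add (mul_le_mul_right hc _) (mul_le_mul_right hcc _)
    _ = K₂ * (μ E * (ν[|E']) T) + K₂ * (μ Eᶜ * (ν[|E'ᶜ]) T) + (μ E + μ Eᶜ) * d := by
        ring
    _ ≤ K₂ * ((K₁ * ν E') * (ν[|E']) T) + K₂ * ((K₁ * ν E'ᶜ) * (ν[|E'ᶜ]) T)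
          + (μ E + μ Eᶜ) * d := by
        gcongr
    _ = K₁ * K₂ * (ν E' * (ν[|E']) T + ν E'ᶜ * (ν[|E'ᶜ]) T) + d := by
        rw [hone, one_mul]; ring
    _ = ENNReal.ofReal (Real.exp (ε₁ + ε₂)) * ν T + d := by
        rw [mul_cond_apply' ν hE', mul_cond_apply' ν hE'.compl, hνsplit, hK]

/-- If the event probabilities `μ E` and `ν E'` (and those of the complements) agree up
to a factor `e^{ε₁}`, and the conditional distributions on `E`/`E'` and on `¬E`/`¬E'`
are `(ε₂,δ)`-DP-indistinguishable, then `μ` and `ν` are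
`(ε₁+ε₂, δ e^{ε₁})`-DP-indistinguishable. -/
theorem dpIndist_of_cond {X : Type*} [MeasurableSpace X]
    (μ ν : Measure X) [IsProbabilityMeasure μ] [IsProbabilityMeasure ν]
    (ε₁ ε₂ δ : ℝ) (hε₁ : 0 ≤ ε₁) (hε₂ : 0 ≤ ε₂) (hδ : 0 ≤ δ)
    (E E' : Set X) (hE : MeasurableSet E) (hE' : MeasurableSet E')
    (hratio : μ E ≤ ENNReal.ofReal (Real.exp ε₁) * ν E' ∧
              ν E' ≤ ENNReal.ofReal (Real.exp ε₁) * μ E)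
    (hratioc : μ Eᶜ ≤ ENNReal.ofReal (Real.exp ε₁) * ν E'ᶜ ∧
               ν E'ᶜ ≤ ENNReal.ofReal (Real.exp ε₁) * μ Eᶜ)
    (hcond : DPIndist ε₂ δ (μ[|E]) (ν[|E']))
    (hcondc : DPIndist ε₂ δ (μ[|Eᶜ]) (ν[|E'ᶜ])) :
    DPIndist (ε₁ + ε₂) (δ * Real.exp ε₁) μ ν := by
  intro T hT
  have hdle : ENNReal.ofReal δ ≤ ENNReal.ofReal (δ * Real.exp ε₁) :=
    ENNReal.ofReal_le_ofReal (le_mul_of_one_le_right hδ (Real.one_le_exp hε₁))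
  constructor
  · exact le_trans
      (dp_aux_one μ ν ε₁ ε₂ δ hE hE' hratio.1 hratioc.1 hT (hcond T hT).1 (hcondc T hT).1)
      (add_le_add_right hdle _)
  · exact le_trans
      (dp_aux_one ν μ ε₁ ε₂ δ hE' hE hratio.2 hratioc.2 hT (hcond T hT).2 (hcondc T hT).2)
      (add_le_add_right hdle _)
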